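/- Let V = ⊕_{i=1}^m I[b'_i, d'_i] be a representation of A_w with all d'_i distinct, common midpoint (b'_i + d'_i = 2μ for all i), and let I_V = I[max_i b'_i, max_j d'_j]. Then for every i there is a nonzero morphism I_V → I[b'_i, d'_i], and the morphism η: I_V → V with all components equal to these canonical nonzero morphisms has the property: for any endomorphism φ of V with diagonal matrix form having scalar entries c_1, ..., c_m and any endomorphism ψ of I_V (a scalar λ) satisfying φ ∘ η = η ∘ ψ, one has c_1 = c_2 = ... = c_m = λ. -/

import Mathlib

open scoped Classical

/-- A persistence module over a poset `P`: a functor `P → vect_K`. -/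
structure PersMod (K : Type) [Field K] (P : Type) [Preorder P] : Type 1 where
  V : P → Type
  [acg : ∀ p, AddCommGroup (V p)]
  [mod : ∀ p, Module K (V p)]
  map : ∀ {p q : P}, p ≤ q → (V p →ₗ[K] V q)
  map_id : ∀ p : P, map (le_refl p) = LinearMap.id
  map_comp : ∀ {p q r : P} (hpq : p ≤ q) (hqr : q ≤ r),
    map (le_trans hpq hqr) = (map hqr).comp (map hpq)

attribute [instance] PersMod.acg PersMod.mod

variable {K : Type} [Field K] {P : Type} [Preorder P]

/-- The space of morphisms (natural transformations) between two persistence modules,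
as a submodule of the product of the spaces of linear maps. -/
def HomSpace (M N : PersMod K P) : Submodule K (∀ p, M.V p →ₗ[K] N.V p) where
  carrier := {f | ∀ (p q : P) (h : p ≤ q), (N.map h).comp (f p) = (f q).comp (M.map h)}
  add_mem' := by
    intro f g hf hg p q h
    simp only [Pi.add_apply, LinearMap.comp_add, LinearMap.add_comp, hf p q h, hg p q h]
  zero_mem' := by intro p q h; simp
  smul_mem' := by
    intro c f hf p q h
    simp only [Pi.smul_apply, LinearMap.comp_smul, LinearMap.smul_comp, hf p q h]

/-- Helper: an element of the zero part of an interval module is zero. -/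
lemma seg_val_zero {c : Prop} {inst : Decidable c} (h : ¬c)
    (x : ↥(@ite _ c inst (⊤ : Submodule K K) ⊥)) :
    (x : K) = 0 := by
  obtain ⟨v, hv⟩ := x
  rw [if_neg h] at hv
  exact (Submodule.mem_bot K).mp hv

/-- The interval (segment / rectangle) module `I[a,b]`: value `K` on points `x` with
`a ≤ x ≤ b`, zero elsewhere, identity internal maps. -/
noncomputable def seg (a b : P) : PersMod K P where
  V x := ↥(if a ≤ x ∧ x ≤ b then (⊤ : Submodule K K) else ⊥)
  map {x y} hxy :=
    { toFun := fun c => ⟨if a ≤ x ∧ y ≤ b then (c : K) else 0, by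
        by_cases hc : a ≤ x ∧ y ≤ b
        · rw [if_pos hc, if_pos ⟨le_trans hc.1 hxy, hc.2⟩]; trivial
        · rw [if_neg hc]; exact Submodule.zero_mem _⟩
      map_add' := by
        intro c d; apply Subtype.ext
        by_cases hc : a ≤ x ∧ y ≤ b <;> simp [hc]
      map_smul' := by
        intro r c; apply Subtype.ext
        by_cases hc : a ≤ x ∧ y ≤ b <;> simp [hc] }
  map_id := by
    intro p
    apply LinearMap.ext; intro c
    apply Subtype.ext
    show (if a ≤ p ∧ p ≤ b then (c : K) else 0) = (c : K)
    by_cases hc : a ≤ p ∧ p ≤ b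
    · rw [if_pos hc]
    · rw [seg_val_zero hc c, ite_self]
  map_comp := by
    intro p q r hpq hqr
    apply LinearMap.ext; intro c
    apply Subtype.ext
    show (if a ≤ p ∧ r ≤ b then (c : K) else 0)
      = (if a ≤ q ∧ r ≤ b then (if a ≤ p ∧ q ≤ b then (c : K) else 0) else 0)
    by_cases h1 : a ≤ p ∧ r ≤ b
    · rw [if_pos h1,
        if_pos (show a ≤ q ∧ r ≤ b from ⟨le_trans h1.1 hpq, h1.2⟩),
        if_pos (show a ≤ p ∧ q ≤ b from ⟨h1.1, le_trans hqr h1.2⟩)]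
    · rw [if_neg h1]
      by_cases h2 : a ≤ q ∧ r ≤ b
      · rw [if_pos h2, if_neg (fun h3 => h1 ⟨h3.1, h2.2⟩)]
      · rw [if_neg h2]

/-- The canonical morphism `I[a,b] → I[c,d]`: identity on the intersection, zero elsewhere. -/
noncomputable def canonMap (a b c d : P) (p : P) :
    (seg (K := K) a b).V p →ₗ[K] (seg (K := K) c d).V p where
  toFun v := ⟨if c ≤ p ∧ p ≤ d then v.1 else 0, by
    by_cases hc : c ≤ p ∧ p ≤ d
    · simp only [if_pos hc]; trivial
    · simp only [if_neg hc]; exact Submodule.zero_mem _⟩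
  map_add' := by
    intro v w; apply Subtype.ext
    show (if c ≤ p ∧ p ≤ d then (v + w).1 else 0)
      = (if c ≤ p ∧ p ≤ d then v.1 else 0) + (if c ≤ p ∧ p ≤ d then w.1 else 0)
    by_cases hc : c ≤ p ∧ p ≤ d
    · simp only [if_pos hc]; rfl
    · simp only [if_neg hc]; simp
  map_smul' := by
    intro r v; apply Subtype.ext
    show (if c ≤ p ∧ p ≤ d then (r • v).1 else 0) = r • (if c ≤ p ∧ p ≤ d then v.1 else 0)
    by_cases hc : c ≤ p ∧ p ≤ d
    · simp only [if_pos hc]; rfl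
    · simp only [if_neg hc]; simp

/-- Finite direct sum of persistence modules. -/
noncomputable def dsum {m : ℕ} (M : Fin m → PersMod K P) : PersMod K P where
  V p := ∀ i, (M i).V p
  map h := LinearMap.pi (fun i => ((M i).map h).comp (LinearMap.proj i))
  map_id := by
    intro p
    apply LinearMap.ext; intro v; funext i
    simp [LinearMap.pi, (M i).map_id]
  map_comp := by
    intro p q r h1 h2
    apply LinearMap.ext; intro v; funext i
    simp [LinearMap.pi, (M i).map_comp h1 h2]

/-- Direct sum of two persistence modules. -/
noncomputable def dsum2 (A B : PersMod K P) : PersMod K P where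
  V p := A.V p × B.V p
  map h := (A.map h).prodMap (B.map h)
  map_id := by
    intro p
    show (A.map (le_refl p)).prodMap (B.map (le_refl p)) = LinearMap.id
    rw [A.map_id, B.map_id]
    exact LinearMap.prodMap_id
  map_comp := by
    intro p q r h1 h2
    show (A.map (le_trans h1 h2)).prodMap (B.map (le_trans h1 h2))
      = ((A.map h2).prodMap (B.map h2)).comp ((A.map h1).prodMap (B.map h1))
    rw [A.map_comp h1 h2, B.map_comp h1 h2]
    exact (LinearMap.prodMap_comp _ _ _ _).symm

/-- Isomorphism of persistence modules. -/
def PersIso (M N : PersMod K P) : Prop :=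
  ∃ f ∈ HomSpace M N, ∀ p, Function.Bijective (f p)

/-- The endomorphism algebra of a persistence module. -/
def EndAlg (M : PersMod K P) : Subalgebra K (∀ p, Module.End K (M.V p)) where
  carrier := {f | ∀ (p q : P) (h : p ≤ q), (M.map h).comp (f p) = (f q).comp (M.map h)}
  add_mem' := by
    intro f g hf hg p q h
    simp only [Pi.add_apply, LinearMap.comp_add, LinearMap.add_comp, hf p q h, hg p q h]
  mul_mem' := by
    intro f g hf hg p q h
    show (M.map h).comp ((f p).comp (g p)) = ((f q).comp (g q)).comp (M.map h)
    rw [← LinearMap.comp_assoc, hf p q h, LinearMap.comp_assoc, hg p q h,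
      LinearMap.comp_assoc]
  one_mem' := by intro p q h; rfl
  algebraMap_mem' := by
    intro c p q h
    apply LinearMap.ext; intro v
    simp only [Pi.algebraMap_apply, Module.algebraMap_end_eq_smul_id, LinearMap.comp_apply,
      LinearMap.smul_apply, LinearMap.id_apply, map_smul]

/-- Restriction of a `ℤ×ℤ`-persistence module along a monotone map (a "line"). -/
noncomputable def restrict (L : ℤ → ℤ × ℤ) (hL : Monotone L) (M : PersMod K (ℤ × ℤ)) :
    PersMod K ℤ where
  V i := M.V (L i)
  map h := M.map (hL h)
  map_id := fun p => M.map_id (L p)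
  map_comp := fun h1 h2 => M.map_comp (hL h1) (hL h2)


/-- The canonical map is a morphism when `c ≤ a ≤ d ≤ b`. -/
lemma canon_mem {K : Type} [Field K] (a b c d : ℤ) (hca : c ≤ a) (had : a ≤ d) (hdb : d ≤ b) :
    (fun p => canonMap (K := K) a b c d p) ∈ HomSpace (seg a b) (seg c d) := by
  intro p q h
  apply LinearMap.ext; intro v
  apply Subtype.ext
  simp only [LinearMap.coe_comp, Function.comp_apply, seg, canonMap, LinearMap.coe_mk,
    AddHom.coe_mk]
  show @ite K (c ≤ p ∧ q ≤ d) (@instDecidableAnd _ _ (Classical.propDecidable _) (Classical.propDecidable _))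
      (@ite K (c ≤ p ∧ p ≤ d) (@instDecidableAnd _ _ (Classical.propDecidable _) (Classical.propDecidable _)) v.1 0) 0
    = @ite K (c ≤ q ∧ q ≤ d) (@instDecidableAnd _ _ (Classical.propDecidable _) (Classical.propDecidable _))
      (@ite K (a ≤ p ∧ q ≤ b) (@instDecidableAnd _ _ (Classical.propDecidable _) (Classical.propDecidable _)) v.1 0) 0
  by_cases hv : a ≤ p ∧ p ≤ b
  case neg => rw [seg_val_zero hv v]; simp
  by_cases h1 : c ≤ p ∧ q ≤ d
  · rw [if_pos h1, if_pos (show c ≤ p ∧ p ≤ d from ⟨h1.1, le_trans h h1.2⟩),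
      if_pos (show c ≤ q ∧ q ≤ d from ⟨le_trans h1.1 h, h1.2⟩),
      if_pos (show a ≤ p ∧ q ≤ b from ⟨hv.1, le_trans h1.2 hdb⟩)]
  · rw [if_neg h1]
    by_cases h2 : c ≤ q ∧ q ≤ d
    · rw [if_pos h2, if_neg (fun h3 => h1 ⟨le_trans hca h3.1, h2.2⟩)]
    · rw [if_neg h2]

/-- Value of the canonical map on the common support. -/
lemma canon_val {K : Type} [Field K] (a b c d p : ℤ) (h : c ≤ p ∧ p ≤ d)
    (v : (seg (K := K) a b).V p) :
    (canonMap (K := K) a b c d p v).1 = v.1 := by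
  simp only [canonMap, LinearMap.coe_mk, AddHom.coe_mk]
  exact if_pos h

/-- Coning: with `I_V = I[max b'_i, max d'_j]` over a vertical family,
each canonical morphism `I_V → I[b'_i, d'_i]` is a nonzero morphism, and if a diagonal
endomorphism `φ` (scalars `c_i`) of `⊕ I[b'_i,d'_i]` intertwines the coning morphism with
the scalar `λ` on `I_V`, then `c_1 = ... = c_m = λ`. -/
theorem stmt_17 (K : Type) [Field K] (m : ℕ) (hm : 0 < m)
    (b' d' : Fin m → ℤ) (mu2 Bmax Dmax : ℤ)
    (hbd : ∀ i, b' i ≤ d' i)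
    (hinj : Function.Injective d')
    (hvert : ∀ i, b' i + d' i = mu2)
    (hB : ∀ i, b' i ≤ Bmax) (hBmem : ∃ i, b' i = Bmax)
    (hD : ∀ i, d' i ≤ Dmax) (hDmem : ∃ i, d' i = Dmax) :
    (∀ i, (fun p => canonMap (K := K) Bmax Dmax (b' i) (d' i) p)
        ∈ HomSpace (seg Bmax Dmax) (seg (b' i) (d' i)) ∧
      (fun p => canonMap (K := K) Bmax Dmax (b' i) (d' i) p) ≠ 0) ∧
    ∀ (c : Fin m → K)
      (phi : ∀ p : ℤ, (dsum (K := K) fun i => seg (b' i) (d' i)).V p →ₗ[K]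
        (dsum (K := K) fun i => seg (b' i) (d' i)).V p),
      phi ∈ HomSpace (dsum fun i => seg (b' i) (d' i)) (dsum fun i => seg (b' i) (d' i)) →
      (∀ (p : ℤ) (v : ∀ k, (seg (K := K) (b' k) (d' k)).V p) (k : Fin m),
        phi p v k = c k • v k) →
      ∀ lam : K,
        (∀ (p : ℤ) (v : (seg (K := K) Bmax Dmax).V p),
          phi p (fun k => canonMap Bmax Dmax (b' k) (d' k) p v)
            = fun k => canonMap Bmax Dmax (b' k) (d' k) p (lam • v)) →
        ∀ i, c i = lam := by
  -- Key order facts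
  obtain ⟨j, hj⟩ := hBmem
  have hBd : ∀ i, Bmax ≤ d' i := by
    intro i
    have h1 := hvert i; have h2 := hvert j; have h3 := hB i; have h4 := hbd j
    omega
  have hBD : Bmax ≤ Dmax := le_trans (hBd j) (hD j)
  constructor
  · intro i
    refine ⟨canon_mem Bmax Dmax (b' i) (d' i) (hB i) (hBd i) (hD i), ?_⟩
    intro h0
    obtain ⟨v, hv1⟩ : ∃ v : (seg (K := K) Bmax Dmax).V Bmax, Subtype.val v = 1 :=
      ⟨⟨1, by rw [if_pos ⟨le_refl Bmax, hBD⟩]; trivial⟩, rfl⟩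
    have h1 : (canonMap (K := K) Bmax Dmax (b' i) (d' i) Bmax v).1 = 0 := by
      rw [congrFun h0 Bmax]; rfl
    have h2 : (canonMap (K := K) Bmax Dmax (b' i) (d' i) Bmax v).1 = 1 := by
      simp only [canonMap, LinearMap.coe_mk, AddHom.coe_mk]
      exact (if_pos ⟨hB i, hBd i⟩).trans hv1
    rw [h1] at h2
    exact one_ne_zero h2.symm
  · intro c phi _ hdiag lam hcomm i
    obtain ⟨v, hv1⟩ : ∃ v : (seg (K := K) Bmax Dmax).V Bmax, Subtype.val v = 1 :=
      ⟨⟨1, by rw [if_pos ⟨le_refl Bmax, hBD⟩]; trivial⟩, rfl⟩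
    have h := congrFun (hcomm Bmax v) i
    rw [hdiag Bmax _ i] at h
    have key : c i • (1 : K) = lam • (1 : K) := by
      calc c i • (1 : K)
          = c i • (canonMap (K := K) Bmax Dmax (b' i) (d' i) Bmax v).1 := by
            rw [canon_val _ _ _ _ _ ⟨hB i, hBd i⟩, hv1]
        _ = (c i • canonMap (K := K) Bmax Dmax (b' i) (d' i) Bmax v).1 := rfl
        _ = (canonMap (K := K) Bmax Dmax (b' i) (d' i) Bmax (lam • v)).1 :=
            congrArg Subtype.val h
        _ = (lam • v).1 := canon_val _ _ _ _ _ ⟨hB i, hBd i⟩ _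
        _ = lam • v.1 := rfl
        _ = lam • 1 := by rw [hv1]
    simpa using key
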